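/- Let η > 0 and let W : [0,1]² → [0,M] be a piecewise θ-Lipschitz DiKernel with respect to a partition of [0,1] into K intervals. Then there exists n₀ ∈ ℕ such that for every n ≥ n₀ and every interval partition 𝒱 of [0,1] whose cells all have measure at most 1/n, the dynamics fₜ = Tᵗ(W)f₀ and f̃ₜ = Tᵗ(W_𝒱)f₀ satisfy ‖fₜ − f̃ₜ‖₁ ≤ min{2, tη} for all t ∈ ℕ₊ and every initial opinion f₀ with values in [-1,1]. -/

import Mathlib

open MeasureTheory Set

noncomputable def Tk (W : ℝ → ℝ → ℝ) (f : ℝ → ℝ) : ℝ → ℝ :=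
  fun x => ∫ y in Icc (0:ℝ) 1, W x y * f y

noncomputable def L1norm (f : ℝ → ℝ) : ℝ :=
  ∫ x in Icc (0:ℝ) 1, |f x|

noncomputable def cutNorm (U : ℝ → ℝ → ℝ) : ℝ :=
  ⨆ p : {p : Set ℝ × Set ℝ // MeasurableSet p.1 ∧ MeasurableSet p.2},
    |∫ x in p.1.1 ∩ Icc (0:ℝ) 1, ∫ y in p.1.2 ∩ Icc (0:ℝ) 1, U x y|

structure IntervalPartition (n : ℕ) where
  a : ℕ → ℝ
  mono : ∀ i < n, a i < a (i + 1)
  first : a 0 = 0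
  last : a n = 1

def IntervalPartition.cell {n : ℕ} (P : IntervalPartition n) (i : Fin n) : Set ℝ :=
  if (i : ℕ) + 1 = n then Icc (P.a i) (P.a ((i : ℕ) + 1))
  else Ico (P.a i) (P.a ((i : ℕ) + 1))

noncomputable def discretize {n : ℕ} (W : ℝ → ℝ → ℝ) (P : IntervalPartition n) : ℝ → ℝ → ℝ :=
  fun x y => ∑ i : Fin n, ∑ j : Fin n,
    (P.cell i).indicator 1 x * (P.cell j).indicator 1 y *
      ((∫ u in P.cell i, ∫ v in P.cell j, W u v) /
        ((P.a ((i : ℕ) + 1) - P.a i) * (P.a ((j : ℕ) + 1) - P.a j)))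

noncomputable def blockKernel {n : ℕ} (P : IntervalPartition n)
    (Wm : Matrix (Fin n) (Fin n) ℝ) : ℝ → ℝ → ℝ :=
  fun x y => ∑ i : Fin n, ∑ j : Fin n,
    (P.cell i).indicator 1 x * (P.cell j).indicator 1 y *
      (Wm i j / (P.a ((j : ℕ) + 1) - P.a j))

noncomputable def blockFun {n : ℕ} (P : IntervalPartition n) (v : Fin n → ℝ) : ℝ → ℝ :=
  fun x => ∑ i : Fin n, (P.cell i).indicator 1 x * v i

namespace IntervalPartition
variable {n : ℕ} (P : IntervalPartition n)

lemma npos (P : IntervalPartition n) : 0 < n := by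
  rcases Nat.eq_zero_or_pos n with h | h
  · exfalso
    have h1 := IntervalPartition.last P
    subst h
    rw [IntervalPartition.first P] at h1
    norm_num at h1
  · exact h

lemma a_lt_a {i j : ℕ} (hij : i < j) (hj : j ≤ n) : P.a i < P.a j := by
  induction j with
  | zero => omega
  | succ m ih =>
    rcases Nat.lt_or_ge i m with h | h
    · exact (ih h (by omega)).trans (P.mono m (by omega))
    · have : i = m := by omega
      subst this
      exact P.mono i (by omega)

lemma a_le_a {i j : ℕ} (hij : i ≤ j) (hj : j ≤ n) : P.a i ≤ P.a j := by
  rcases Nat.lt_or_ge i j with h | h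
  · exact (P.a_lt_a h hj).le
  · have : i = j := by omega
    subst this; rfl

lemma a_nonneg {i : ℕ} (hi : i ≤ n) : 0 ≤ P.a i := P.first ▸ P.a_le_a (Nat.zero_le _) hi

lemma a_le_one {i : ℕ} (hi : i ≤ n) : P.a i ≤ 1 := P.last ▸ P.a_le_a hi le_rfl

lemma len_pos (i : Fin n) : 0 < P.a ((i : ℕ) + 1) - P.a i :=
  sub_pos.2 (P.mono i i.isLt)

lemma cell_subset_Icc (i : Fin n) : P.cell i ⊆ Icc (P.a i) (P.a ((i : ℕ) + 1)) := by
  unfold cell; split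
  · exact subset_rfl
  · exact Ico_subset_Icc_self

lemma Ico_subset_cell (i : Fin n) : Ico (P.a i) (P.a ((i : ℕ) + 1)) ⊆ P.cell i := by
  unfold cell; split
  · exact Ico_subset_Icc_self
  · exact subset_rfl

lemma cell_subset (i : Fin n) : P.cell i ⊆ Icc (0 : ℝ) 1 := by
  refine (P.cell_subset_Icc i).trans (Icc_subset_Icc ?_ ?_)
  · exact P.a_nonneg (le_of_lt i.isLt)
  · exact P.a_le_one i.isLt

lemma measurableSet_cell (i : Fin n) : MeasurableSet (P.cell i) := by
  unfold cell; split
  · exact measurableSet_Icc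
  · exact measurableSet_Ico

lemma volume_cell (i : Fin n) :
    volume (P.cell i) = ENNReal.ofReal (P.a ((i : ℕ) + 1) - P.a i) := by
  unfold cell; split
  · exact Real.volume_Icc
  · exact Real.volume_Ico

lemma mem_cell_lower {i : Fin n} {x : ℝ} (hx : x ∈ P.cell i) : P.a i ≤ x :=
  (P.cell_subset_Icc i hx).1

lemma mem_cell_upper {i : Fin n} {x : ℝ} (hx : x ∈ P.cell i) : x ≤ P.a ((i : ℕ) + 1) :=
  (P.cell_subset_Icc i hx).2

lemma disjoint_cell : Pairwise (Function.onFun Disjoint P.cell) := by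
  have key : ∀ i j : Fin n, (i : ℕ) < j → Disjoint (P.cell i) (P.cell j) := by
    intro i j hij
    rw [Set.disjoint_left]
    intro z hzi hzj
    have h1 : z ≤ P.a ((i : ℕ) + 1) := P.mem_cell_upper hzi
    have h2 : P.a (j : ℕ) ≤ z := P.mem_cell_lower hzj
    have hcell : P.cell i = Ico (P.a i) (P.a ((i : ℕ) + 1)) := by
      unfold cell; rw [if_neg]; omega
    rw [hcell] at hzi
    have h3 : z < P.a ((i : ℕ) + 1) := hzi.2
    have h4 : P.a ((i : ℕ) + 1) ≤ P.a (j : ℕ) := P.a_le_a (by omega) (le_of_lt j.isLt)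
    linarith
  intro i j hij
  rcases Nat.lt_or_ge (i : ℕ) (j : ℕ) with h | h
  · exact key i j h
  · have h' : (j : ℕ) < (i : ℕ) := by
      rcases Nat.lt_or_ge (j : ℕ) (i : ℕ) with h' | h'
      · exact h'
      · exact absurd (Fin.ext (by omega)) hij
    exact (key j i h').symm

open Classical in
lemma mem_cell {x : ℝ} (hx : x ∈ Icc (0 : ℝ) 1) : ∃ i : Fin n, x ∈ P.cell i := by
  have hn := P.npos
  set i := Nat.findGreatest (fun m => P.a m ≤ x) (n - 1) with hidef
  have h0 : P.a 0 ≤ x := by rw [P.first]; exact hx.1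
  have hspec : P.a i ≤ x := by
    have := Nat.findGreatest_spec (P := fun m => P.a m ≤ x) (Nat.zero_le (n-1)) h0
    simpa [← hidef] using this
  have hile : i ≤ n - 1 := Nat.findGreatest_le _
  refine ⟨⟨i, by omega⟩, ?_⟩
  by_cases hlast : i + 1 = n
  · unfold cell
    simp only [hlast, if_pos rfl]
    exact ⟨hspec, by rw [IntervalPartition.last P]; exact hx.2⟩
  · unfold cell
    simp only [if_neg hlast]
    refine ⟨hspec, ?_⟩
    by_contra hcon
    push_neg at hcon
    exact Nat.findGreatest_is_greatest (lt_add_one i) (by omega) hcon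

lemma iUnion_cell : (⋃ i, P.cell i) = Icc (0 : ℝ) 1 := by
  apply Set.Subset.antisymm
  · exact Set.iUnion_subset fun i => P.cell_subset i
  · intro x hx
    obtain ⟨i, hi⟩ := P.mem_cell hx
    exact Set.mem_iUnion.2 ⟨i, hi⟩

lemma cell_unique {x : ℝ} {i j : Fin n} (hi : x ∈ P.cell i) (hj : x ∈ P.cell j) : i = j := by
  by_contra h
  exact Set.disjoint_left.1 (P.disjoint_cell h) hi hj

end IntervalPartition

-- ## Integration utilities

lemma integrableOn_of_bdd {g : ℝ → ℝ} {s : Set ℝ} (hs : MeasurableSet s)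
    (hv : volume s ≠ ⊤) (hg : Measurable g) {C : ℝ} (hb : ∀ x ∈ s, |g x| ≤ C) :
    IntegrableOn g s := by
  apply Measure.integrableOn_of_bounded hv hg.aestronglyMeasurable (M := C)
  rw [ae_restrict_iff' hs]
  exact ae_of_all _ (fun x hx => by rw [Real.norm_eq_abs]; exact hb x hx)

lemma meas_param {F : ℝ → ℝ → ℝ} (hF : Measurable fun p : ℝ × ℝ => F p.1 p.2) (B : Set ℝ) :
    Measurable fun x => ∫ y in B, F x y :=
  hF.stronglyMeasurable.integral_prod_right'.measurable

lemma abs_setIntegral_le {g : ℝ → ℝ} {s : Set ℝ} (hs : MeasurableSet s)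
    (hv : volume s < ⊤) {C : ℝ} (hb : ∀ x ∈ s, |g x| ≤ C) :
    |∫ x in s, g x| ≤ C * (volume s).toReal := by
  rw [← Real.norm_eq_abs]
  exact norm_setIntegral_le_of_norm_le_const hv
    (fun x hx => by rw [Real.norm_eq_abs]; exact hb x hx)

lemma volume_S : volume (Icc (0:ℝ) 1) = 1 := by
  rw [Real.volume_Icc]; norm_num

lemma setIntegral_S_const (c : ℝ) : ∫ _ in Icc (0:ℝ) 1, c = c := by
  rw [setIntegral_const, measureReal_def, volume_S]; simp

namespace IntervalPartition
variable {n : ℕ} (P : IntervalPartition n)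

lemma integral_cell_split (g : ℝ → ℝ) (hg : IntegrableOn g (Icc (0:ℝ) 1)) :
    ∫ x in Icc (0:ℝ) 1, g x = ∑ i : Fin n, ∫ x in P.cell i, g x := by
  rw [← P.iUnion_cell] at hg ⊢
  rw [integral_iUnion P.measurableSet_cell P.disjoint_cell hg, tsum_fintype]

lemma sum_ind_eq {x : ℝ} {i₀ : Fin n} (hx : x ∈ P.cell i₀) (c : Fin n → ℝ) :
    (∑ i : Fin n, (P.cell i).indicator 1 x * c i) = c i₀ := by
  rw [Finset.sum_eq_single i₀]
  · rw [Set.indicator_of_mem hx, Pi.one_apply, one_mul]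
  · intro j _ hj
    rw [Set.indicator_of_notMem, zero_mul]
    intro hxj
    exact hj (P.cell_unique hxj hx)
  · intro h
    exact absurd (Finset.mem_univ i₀) h

end IntervalPartition


namespace IntervalPartition
variable {n : ℕ} (P : IntervalPartition n)

lemma cell_vol_toReal (i : Fin n) :
    (volume (P.cell i)).toReal = P.a ((i : ℕ) + 1) - P.a i := by
  rw [P.volume_cell i, ENNReal.toReal_ofReal (P.len_pos i).le]

lemma volume_cell_ne_top (i : Fin n) : volume (P.cell i) ≠ ⊤ := by
  rw [P.volume_cell i]; exact ENNReal.ofReal_ne_top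

end IntervalPartition

section Discretize
variable {n : ℕ} (P : IntervalPartition n) (W : ℝ → ℝ → ℝ)

lemma discretize_eq {x y : ℝ} {i j : Fin n} (hx : x ∈ P.cell i) (hy : y ∈ P.cell j) :
    discretize W P x y = (∫ u in P.cell i, ∫ v in P.cell j, W u v) /
      ((P.a ((i : ℕ) + 1) - P.a i) * (P.a ((j : ℕ) + 1) - P.a j)) := by
  unfold discretize
  simp only [mul_assoc, ← Finset.mul_sum]
  rw [P.sum_ind_eq hx, P.sum_ind_eq hy]

lemma discretize_measurable : Measurable (Function.uncurry (discretize W P)) := by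
  unfold discretize Function.uncurry
  apply Finset.measurable_sum
  intro i _
  apply Finset.measurable_sum
  intro j _
  exact ((((measurable_one.indicator (P.measurableSet_cell i)).comp measurable_fst).mul
    ((measurable_one.indicator (P.measurableSet_cell j)).comp measurable_snd)).mul
    measurable_const)

end Discretize

section Kernel
variable {M : ℝ} {W : ℝ → ℝ → ℝ}

lemma integrableOn_sect (hWmeas : Measurable (Function.uncurry W))
    (hWbdd : ∀ x ∈ Icc (0:ℝ) 1, ∀ y ∈ Icc (0:ℝ) 1, W x y ∈ Icc (0:ℝ) M)
    {x : ℝ} (hx : x ∈ Icc (0:ℝ) 1) {B : Set ℝ} (hB : MeasurableSet B)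
    (hBS : B ⊆ Icc (0:ℝ) 1) : IntegrableOn (fun y => W x y) B := by
  have hv : volume B ≠ ⊤ := by
    refine ne_top_of_le_ne_top ?_ (measure_mono hBS)
    rw [volume_S]; exact ENNReal.one_ne_top
  refine integrableOn_of_bdd hB hv (hWmeas.comp (measurable_prodMk_left)) (C := M) ?_
  intro y hy
  obtain ⟨h0, h1⟩ := hWbdd x hx y (hBS hy)
  rw [abs_of_nonneg h0]; exact h1

lemma integrableOn_mul_sect (hWmeas : Measurable (Function.uncurry W))
    (hWbdd : ∀ x ∈ Icc (0:ℝ) 1, ∀ y ∈ Icc (0:ℝ) 1, W x y ∈ Icc (0:ℝ) M)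
    {x : ℝ} (hx : x ∈ Icc (0:ℝ) 1) {f : ℝ → ℝ} (hf : Measurable f) {c : ℝ}
    (hfb : ∀ y ∈ Icc (0:ℝ) 1, |f y| ≤ c) {B : Set ℝ} (hB : MeasurableSet B)
    (hBS : B ⊆ Icc (0:ℝ) 1) : IntegrableOn (fun y => W x y * f y) B := by
  have hv : volume B ≠ ⊤ := by
    refine ne_top_of_le_ne_top ?_ (measure_mono hBS)
    rw [volume_S]; exact ENNReal.one_ne_top
  refine integrableOn_of_bdd hB hv
    ((hWmeas.comp (measurable_prodMk_left)).mul hf) (C := M * c) ?_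
  intro y hy
  obtain ⟨h0, h1⟩ := hWbdd x hx y (hBS hy)
  rw [abs_mul, abs_of_nonneg h0]
  exact mul_le_mul h1 (hfb y (hBS hy)) (abs_nonneg _) (h0.trans h1)

lemma Tk_measurable (hWmeas : Measurable (Function.uncurry W)) {f : ℝ → ℝ}
    (hf : Measurable f) : Measurable (Tk W f) :=
  meas_param (F := fun x y => W x y * f y) (hWmeas.mul (hf.comp measurable_snd)) _

lemma Tk_mem_Icc (hWmeas : Measurable (Function.uncurry W))
    (hWbdd : ∀ x ∈ Icc (0:ℝ) 1, ∀ y ∈ Icc (0:ℝ) 1, W x y ∈ Icc (0:ℝ) M)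
    (hWrow : ∀ x ∈ Icc (0:ℝ) 1, (∫ y in Icc (0:ℝ) 1, W x y) = 1)
    {f : ℝ → ℝ} (hf : Measurable f) (hfb : ∀ y ∈ Icc (0:ℝ) 1, f y ∈ Icc (-1:ℝ) 1) :
    ∀ x ∈ Icc (0:ℝ) 1, Tk W f x ∈ Icc (-1:ℝ) 1 := by
  intro x hx
  have hfb' : ∀ y ∈ Icc (0:ℝ) 1, |f y| ≤ 1 := by
    intro y hy; rw [abs_le]; exact ⟨(hfb y hy).1, (hfb y hy).2⟩
  have hint : IntegrableOn (fun y => W x y * f y) (Icc (0:ℝ) 1) :=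
    integrableOn_mul_sect hWmeas hWbdd hx hf hfb' measurableSet_Icc subset_rfl
  have hintW : IntegrableOn (fun y => W x y) (Icc (0:ℝ) 1) :=
    integrableOn_sect hWmeas hWbdd hx measurableSet_Icc subset_rfl
  constructor
  · have : (-1 : ℝ) = ∫ y in Icc (0:ℝ) 1, -(W x y) := by
      rw [integral_neg, hWrow x hx]
    rw [this]
    refine setIntegral_mono_on hintW.neg hint measurableSet_Icc ?_
    intro y hy
    have h0 := (hWbdd x hx y hy).1
    nlinarith [(hfb y hy).1, (hfb y hy).2]
  · have : (1 : ℝ) = ∫ y in Icc (0:ℝ) 1, W x y := (hWrow x hx).symm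
    rw [this]
    refine setIntegral_mono_on hint hintW measurableSet_Icc ?_
    intro y hy
    have h0 := (hWbdd x hx y hy).1
    nlinarith [(hfb y hy).1, (hfb y hy).2]

lemma Tk_iterate_props (hWmeas : Measurable (Function.uncurry W))
    (hWbdd : ∀ x ∈ Icc (0:ℝ) 1, ∀ y ∈ Icc (0:ℝ) 1, W x y ∈ Icc (0:ℝ) M)
    (hWrow : ∀ x ∈ Icc (0:ℝ) 1, (∫ y in Icc (0:ℝ) 1, W x y) = 1)
    {f₀ : ℝ → ℝ} (hf₀ : Measurable f₀) (hfb : ∀ y ∈ Icc (0:ℝ) 1, f₀ y ∈ Icc (-1:ℝ) 1) :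
    ∀ t : ℕ, Measurable ((Tk W)^[t] f₀) ∧
      ∀ x ∈ Icc (0:ℝ) 1, (Tk W)^[t] f₀ x ∈ Icc (-1:ℝ) 1 := by
  intro t
  induction t with
  | zero => exact ⟨hf₀, hfb⟩
  | succ m ih =>
    rw [Function.iterate_succ_apply']
    exact ⟨Tk_measurable hWmeas ih.1, Tk_mem_Icc hWmeas hWbdd hWrow ih.1 ih.2⟩

end Kernel


section DiscProps
variable {M : ℝ} {W : ℝ → ℝ → ℝ} {n : ℕ}

lemma intint_nonneg (Q : IntervalPartition n)
    (hWbdd : ∀ x ∈ Icc (0:ℝ) 1, ∀ y ∈ Icc (0:ℝ) 1, W x y ∈ Icc (0:ℝ) M)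
    (i j : Fin n) : 0 ≤ ∫ u in Q.cell i, ∫ v in Q.cell j, W u v := by
  refine setIntegral_nonneg (Q.measurableSet_cell i) (fun u hu => ?_)
  refine setIntegral_nonneg (Q.measurableSet_cell j) (fun v hv => ?_)
  exact (hWbdd u (Q.cell_subset i hu) v (Q.cell_subset j hv)).1

lemma inner_int_integrableOn (Q : IntervalPartition n)
    (hWmeas : Measurable (Function.uncurry W))
    (hWbdd : ∀ x ∈ Icc (0:ℝ) 1, ∀ y ∈ Icc (0:ℝ) 1, W x y ∈ Icc (0:ℝ) M)
    (hM : 0 ≤ M) (i j : Fin n) :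
    IntegrableOn (fun u => ∫ v in Q.cell j, W u v) (Q.cell i) := by
  refine integrableOn_of_bdd (Q.measurableSet_cell i) (Q.volume_cell_ne_top i)
    (meas_param hWmeas _) (C := M * (Q.a ((j : ℕ) + 1) - Q.a j)) ?_
  intro u hu
  have := abs_setIntegral_le (g := fun v => W u v) (Q.measurableSet_cell j)
    ((Q.volume_cell_ne_top j).lt_top) (C := M) ?_
  · rw [Q.cell_vol_toReal j] at this; exact this
  · intro v hv
    obtain ⟨h0, h1⟩ := hWbdd u (Q.cell_subset i hu) v (Q.cell_subset j hv)
    rw [abs_of_nonneg h0]; exact h1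

lemma intint_le (Q : IntervalPartition n)
    (hWmeas : Measurable (Function.uncurry W))
    (hWbdd : ∀ x ∈ Icc (0:ℝ) 1, ∀ y ∈ Icc (0:ℝ) 1, W x y ∈ Icc (0:ℝ) M)
    (hM : 0 ≤ M) (i j : Fin n) :
    (∫ u in Q.cell i, ∫ v in Q.cell j, W u v) ≤
      M * (Q.a ((i : ℕ) + 1) - Q.a i) * (Q.a ((j : ℕ) + 1) - Q.a j) := by
  have step1 : (∫ u in Q.cell i, ∫ v in Q.cell j, W u v) ≤
      ∫ _ in Q.cell i, M * (Q.a ((j : ℕ) + 1) - Q.a j) := by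
    refine setIntegral_mono_on (inner_int_integrableOn Q hWmeas hWbdd hM i j)
      (integrableOn_const (Q.volume_cell_ne_top i))
      (Q.measurableSet_cell i) (fun u hu => ?_)
    have step2 : (∫ v in Q.cell j, W u v) ≤ ∫ _ in Q.cell j, M := by
      refine setIntegral_mono_on
        (integrableOn_sect hWmeas hWbdd (Q.cell_subset i hu) (Q.measurableSet_cell j)
          (Q.cell_subset j))
        (integrableOn_const (Q.volume_cell_ne_top j))
        (Q.measurableSet_cell j) (fun v hv => ?_)
      exact (hWbdd u (Q.cell_subset i hu) v (Q.cell_subset j hv)).2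
    rw [setIntegral_const, measureReal_def, Q.cell_vol_toReal j, smul_eq_mul] at step2
    linarith [step2]
  rw [setIntegral_const, measureReal_def, Q.cell_vol_toReal i, smul_eq_mul] at step1
  linarith [step1]

lemma discretize_mem_Icc (Q : IntervalPartition n)
    (hWmeas : Measurable (Function.uncurry W))
    (hWbdd : ∀ x ∈ Icc (0:ℝ) 1, ∀ y ∈ Icc (0:ℝ) 1, W x y ∈ Icc (0:ℝ) M)
    (hM : 0 ≤ M) :
    ∀ x ∈ Icc (0:ℝ) 1, ∀ y ∈ Icc (0:ℝ) 1, discretize W Q x y ∈ Icc (0:ℝ) M := by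
  intro x hx y hy
  obtain ⟨i, hi⟩ := Q.mem_cell hx
  obtain ⟨j, hj⟩ := Q.mem_cell hy
  rw [discretize_eq Q W hi hj]
  have hli := Q.len_pos i
  have hlj := Q.len_pos j
  constructor
  · exact div_nonneg (intint_nonneg Q hWbdd i j) (by positivity)
  · rw [div_le_iff₀ (by positivity)]
    have := intint_le Q hWmeas hWbdd hM i j
    nlinarith

set_option maxHeartbeats 1000000 in
lemma discretize_row (Q : IntervalPartition n)
    (hWmeas : Measurable (Function.uncurry W))
    (hWbdd : ∀ x ∈ Icc (0:ℝ) 1, ∀ y ∈ Icc (0:ℝ) 1, W x y ∈ Icc (0:ℝ) M)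
    (hWrow : ∀ x ∈ Icc (0:ℝ) 1, (∫ y in Icc (0:ℝ) 1, W x y) = 1)
    (hM : 0 ≤ M) :
    ∀ x ∈ Icc (0:ℝ) 1, (∫ y in Icc (0:ℝ) 1, discretize W Q x y) = 1 := by
  intro x hx
  obtain ⟨i, hi⟩ := Q.mem_cell hx
  have hli := Q.len_pos i
  have hsect : IntegrableOn (fun y => discretize W Q x y) (Icc (0:ℝ) 1) := by
    refine integrableOn_of_bdd measurableSet_Icc (by rw [volume_S]; exact ENNReal.one_ne_top)
      ((discretize_measurable Q W).comp measurable_prodMk_left) (C := M) ?_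
    intro y hy
    obtain ⟨h0, h1⟩ := discretize_mem_Icc Q hWmeas hWbdd hM x hx y hy
    rw [abs_of_nonneg h0]; exact h1
  rw [Q.integral_cell_split _ hsect]
  have hcell : ∀ j : Fin n, (∫ y in Q.cell j, discretize W Q x y) =
      (∫ u in Q.cell i, ∫ v in Q.cell j, W u v) / (Q.a ((i : ℕ) + 1) - Q.a i) := by
    intro j
    have hlj := Q.len_pos j
    rw [setIntegral_congr_fun (Q.measurableSet_cell j)
      (g := fun _ => (∫ u in Q.cell i, ∫ v in Q.cell j, W u v) /
        ((Q.a ((i : ℕ) + 1) - Q.a i) * (Q.a ((j : ℕ) + 1) - Q.a j)))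
      (fun y hy => discretize_eq Q W hi hy)]
    rw [setIntegral_const, measureReal_def, Q.cell_vol_toReal j, smul_eq_mul]
    field_simp
  rw [Finset.sum_congr rfl (fun j _ => hcell j), ← Finset.sum_div]
  have hsum : (∑ j : Fin n, ∫ u in Q.cell i, ∫ v in Q.cell j, W u v) =
      ∫ u in Q.cell i, (1 : ℝ) := by
    rw [← integral_finset_sum _ (fun j _ => inner_int_integrableOn Q hWmeas hWbdd hM i j)]
    refine setIntegral_congr_fun (Q.measurableSet_cell i) (fun u hu => ?_)
    have hu' : u ∈ Icc (0:ℝ) 1 := Q.cell_subset i hu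
    rw [← Q.integral_cell_split (fun v => W u v)
      (integrableOn_sect hWmeas hWbdd hu' measurableSet_Icc subset_rfl)]
    exact hWrow u hu'
  rw [hsum, setIntegral_const, measureReal_def, Q.cell_vol_toReal i, smul_eq_mul, mul_one,
    div_self (ne_of_gt hli)]

end DiscProps


lemma abs_setIntegral_le_of_le {g h : ℝ → ℝ} (hg : Measurable g)
    (hh : IntegrableOn h (Icc (0:ℝ) 1)) (hb : ∀ y ∈ Icc (0:ℝ) 1, |g y| ≤ h y) :
    |∫ y in Icc (0:ℝ) 1, g y| ≤ ∫ y in Icc (0:ℝ) 1, h y := by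
  have hgint : IntegrableOn g (Icc (0:ℝ) 1) := by
    refine hh.mono' hg.aestronglyMeasurable ?_
    rw [ae_restrict_iff' measurableSet_Icc]
    exact ae_of_all _ (fun y hy => by rw [Real.norm_eq_abs]; exact hb y hy)
  calc |∫ y in Icc (0:ℝ) 1, g y| ≤ ∫ y in Icc (0:ℝ) 1, |g y| := by
        rw [← Real.norm_eq_abs (∫ y in Icc (0:ℝ) 1, g y)]
        exact norm_integral_le_integral_norm g
    _ ≤ ∫ y in Icc (0:ℝ) 1, h y :=
        setIntegral_mono_on hgint.abs hh measurableSet_Icc (fun y hy => hb y hy)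

lemma bad_breakpoint {K J : ℕ} (I : IntervalPartition K) (Q : IntervalPartition J)
    (j : Fin J) (hbad : ¬ ∃ k : Fin K, Q.cell j ⊆ I.cell k) :
    ∃ k : Fin K, I.a ((k : ℕ) + 1) ∈ Q.cell j := by
  have hq0 : Q.a (j : ℕ) ∈ Icc (0:ℝ) 1 :=
    ⟨Q.a_nonneg (le_of_lt j.isLt), Q.a_le_one (le_of_lt j.isLt)⟩
  obtain ⟨k, hk⟩ := I.mem_cell hq0
  by_cases hcase : I.a ((k : ℕ) + 1) ∈ Q.cell j
  · exact ⟨k, hcase⟩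
  exfalso
  apply hbad
  refine ⟨k, fun z hz => ?_⟩
  have hz1 : Q.a (j : ℕ) ≤ z := Q.mem_cell_lower hz
  have hk1 : I.a (k : ℕ) ≤ Q.a (j : ℕ) := I.mem_cell_lower hk
  have hk2 : Q.a (j : ℕ) ≤ I.a ((k : ℕ) + 1) := I.mem_cell_upper hk
  have hup : Q.a ((j : ℕ) + 1) ≤ I.a ((k : ℕ) + 1) := by
    by_contra hcon
    push_neg at hcon
    apply hcase
    apply Q.Ico_subset_cell j
    constructor
    · exact hk2
    · exact hcon
  by_cases hlast : (j : ℕ) + 1 = J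
  · -- last Q-cell: Q.a (j+1) = 1, so I.a (k+1) = 1 hence k+1 = K
    have hQ1 : Q.a ((j : ℕ) + 1) = 1 := by rw [hlast]; exact Q.last
    have hIk1 : I.a ((k : ℕ) + 1) = 1 := by
      have h1 : I.a ((k : ℕ) + 1) ≤ 1 := I.a_le_one k.isLt
      linarith [hup, hQ1.symm ▸ hup]
    have hkK : (k : ℕ) + 1 = K := by
      by_contra hc
      have : (k : ℕ) + 1 < K := by omega
      have := I.a_lt_a this le_rfl
      rw [I.last] at this
      linarith
    have hzcell : z ∈ Icc (Q.a (j : ℕ)) (Q.a ((j : ℕ) + 1)) := Q.cell_subset_Icc j hz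
    unfold IntervalPartition.cell
    rw [if_pos hkK]
    exact ⟨le_trans hk1 hz1, by rw [hIk1]; linarith [hzcell.2, hQ1]⟩
  · -- not last: Q.cell j = Ico, so z < Q.a (j+1) ≤ I.a (k+1)
    have hzI : z ∈ Ico (Q.a (j : ℕ)) (Q.a ((j : ℕ) + 1)) := by
      have : Q.cell j = Ico (Q.a (j : ℕ)) (Q.a ((j : ℕ) + 1)) := by
        unfold IntervalPartition.cell; rw [if_neg hlast]
      rwa [this] at hz
    apply I.Ico_subset_cell k
    exact ⟨le_trans hk1 hz1, lt_of_lt_of_le hzI.2 hup⟩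

lemma good_approx {M θ : ℝ} {W : ℝ → ℝ → ℝ} {K J : ℕ} (I : IntervalPartition K)
    (Q : IntervalPartition J)
    (hWmeas : Measurable (Function.uncurry W))
    (hWbdd : ∀ x ∈ Icc (0:ℝ) 1, ∀ y ∈ Icc (0:ℝ) 1, W x y ∈ Icc (0:ℝ) M)
    (hM : 0 ≤ M) (hθ : 0 ≤ θ)
    (hLip : ∀ k₁ k₂ : Fin K, ∀ x ∈ I.cell k₁, ∀ x' ∈ I.cell k₁,
      ∀ y ∈ I.cell k₂, ∀ y' ∈ I.cell k₂,
        |W x y - W x' y'| ≤ θ * (|x - x'| + |y - y'|))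
    {i j : Fin J} {k₁ k₂ : Fin K}
    (hik : Q.cell i ⊆ I.cell k₁) (hjk : Q.cell j ⊆ I.cell k₂)
    {x y : ℝ} (hx : x ∈ Q.cell i) (hy : y ∈ Q.cell j) :
    |W x y - (∫ u in Q.cell i, ∫ v in Q.cell j, W u v) /
      ((Q.a ((i:ℕ) + 1) - Q.a i) * (Q.a ((j:ℕ) + 1) - Q.a j))| ≤
      θ * ((Q.a ((i:ℕ) + 1) - Q.a i) + (Q.a ((j:ℕ) + 1) - Q.a j)) := by
  have hli : (0:ℝ) < Q.a ((i:ℕ) + 1) - Q.a i := Q.len_pos i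
  have hlj : (0:ℝ) < Q.a ((j:ℕ) + 1) - Q.a j := Q.len_pos j
  set li := Q.a ((i:ℕ) + 1) - Q.a i with hlidef
  set lj := Q.a ((j:ℕ) + 1) - Q.a j with hljdef
  set c := W x y with hc
  set T := ∫ u in Q.cell i, ∫ v in Q.cell j, W u v with hT
  have hdist : ∀ u ∈ Q.cell i, ∀ v ∈ Q.cell j, |W u v - c| ≤ θ * (li + lj) := by
    intro u hu v hv
    have h1 := hLip k₁ k₂ u (hik hu) x (hik hx) v (hjk hv) y (hjk hy)
    have hu' := Q.cell_subset_Icc i hu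
    have hx' := Q.cell_subset_Icc i hx
    have hv' := Q.cell_subset_Icc j hv
    have hy' := Q.cell_subset_Icc j hy
    have h2 : |u - x| ≤ li := by
      rw [abs_sub_le_iff]
      constructor <;> [linarith [hu'.2, hx'.1, hlidef]; linarith [hu'.1, hx'.2, hlidef]]
    have h3 : |v - y| ≤ lj := by
      rw [abs_sub_le_iff]
      constructor <;> [linarith [hv'.2, hy'.1, hljdef]; linarith [hv'.1, hy'.2, hljdef]]
    calc |W u v - c| ≤ θ * (|u - x| + |v - y|) := h1
      _ ≤ θ * (li + lj) := by
          apply mul_le_mul_of_nonneg_left _ hθ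
          linarith
  have hinner : ∀ u ∈ Q.cell i, |(∫ v in Q.cell j, W u v) - c * lj| ≤ (θ * (li + lj)) * lj := by
    intro u hu
    have hint : IntegrableOn (fun v => W u v) (Q.cell j) :=
      integrableOn_sect hWmeas hWbdd (Q.cell_subset i hu) (Q.measurableSet_cell j)
        (Q.cell_subset j)
    have heq : (∫ v in Q.cell j, W u v) - c * lj = ∫ v in Q.cell j, (W u v - c) := by
      rw [integral_sub hint (integrableOn_const (Q.volume_cell_ne_top j)),
        setIntegral_const, measureReal_def, Q.cell_vol_toReal j, smul_eq_mul]
      ring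
    rw [heq]
    have := abs_setIntegral_le (g := fun v => W u v - c) (Q.measurableSet_cell j)
      (Q.volume_cell_ne_top j).lt_top (C := θ * (li + lj)) (fun v hv => hdist u hu v hv)
    rwa [Q.cell_vol_toReal j] at this
  have houter : |T - c * lj * li| ≤ θ * (li + lj) * lj * li := by
    have hint : IntegrableOn (fun u => ∫ v in Q.cell j, W u v) (Q.cell i) :=
      inner_int_integrableOn Q hWmeas hWbdd hM i j
    have heq : T - c * lj * li = ∫ u in Q.cell i, ((∫ v in Q.cell j, W u v) - c * lj) := by
      rw [integral_sub hint (integrableOn_const (Q.volume_cell_ne_top i)),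
        setIntegral_const, measureReal_def, Q.cell_vol_toReal i, smul_eq_mul, hT]
      ring
    rw [heq]
    have := abs_setIntegral_le (g := fun u => (∫ v in Q.cell j, W u v) - c * lj)
      (Q.measurableSet_cell i) (Q.volume_cell_ne_top i).lt_top
      (C := θ * (li + lj) * lj) (fun u hu => hinner u hu)
    rwa [Q.cell_vol_toReal i] at this
  have key : c - T / (li * lj) = -((T - c * lj * li) / (li * lj)) := by
    field_simp
    ring
  rw [key, abs_neg, abs_div, abs_of_pos (mul_pos hli hlj),
    div_le_iff₀ (mul_pos hli hlj)]
  calc |T - c * lj * li| ≤ θ * (li + lj) * lj * li := houter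
    _ = θ * (li + lj) * (li * lj) := by ring


open Classical in
lemma delta_le {M θ : ℝ} {W : ℝ → ℝ → ℝ} {K J n : ℕ} (hn : 0 < n)
    (I : IntervalPartition K) (Q : IntervalPartition J)
    (hWmeas : Measurable (Function.uncurry W))
    (hWbdd : ∀ x ∈ Icc (0:ℝ) 1, ∀ y ∈ Icc (0:ℝ) 1, W x y ∈ Icc (0:ℝ) M)
    (hM : 0 ≤ M) (hθ : 0 ≤ θ)
    (hLip : ∀ k₁ k₂ : Fin K, ∀ x ∈ I.cell k₁, ∀ x' ∈ I.cell k₁,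
      ∀ y ∈ I.cell k₂, ∀ y' ∈ I.cell k₂,
        |W x y - W x' y'| ≤ θ * (|x - x'| + |y - y'|))
    (hmesh : ∀ i < J, Q.a (i + 1) - Q.a i ≤ 1 / n) :
    (∫ x in Icc (0:ℝ) 1, ∫ y in Icc (0:ℝ) 1, |W x y - discretize W Q x y|) ≤
      (2 * θ + 2 * K * M) / n := by
  have hWQmeas : Measurable (Function.uncurry (discretize W Q)) := discretize_measurable Q W
  have hWQbdd := discretize_mem_Icc Q hWmeas hWbdd hM
  have hnR : (0:ℝ) < n := by exact_mod_cast hn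
  set bs : Finset (Fin J) :=
    Finset.univ.filter (fun j => ¬ ∃ k : Fin K, Q.cell j ⊆ I.cell k) with hbs
  set Bd : Set ℝ := ⋃ j ∈ bs, Q.cell j with hBdDef
  have hBdmeas : MeasurableSet Bd :=
    bs.measurableSet_biUnion (fun j _ => Q.measurableSet_cell j)
  set ind : ℝ → ℝ := Bd.indicator 1 with hindDef
  have hindmeas : Measurable ind := measurable_one.indicator hBdmeas
  have hind01 : ∀ z, 0 ≤ ind z ∧ ind z ≤ 1 := by
    intro z
    by_cases h : z ∈ Bd <;>
      simp [hindDef, Set.indicator_of_mem, Set.indicator_of_notMem, h]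
  have hcard : bs.card ≤ K := by
    have hbp : ∀ j : Fin J, ∃ k : Fin K, j ∈ bs → I.a ((k : ℕ) + 1) ∈ Q.cell j := by
      intro j
      by_cases hj : j ∈ bs
      · obtain ⟨k, hk⟩ := bad_breakpoint I Q j (by simpa [hbs] using hj)
        exact ⟨k, fun _ => hk⟩
      · exact ⟨⟨0, I.npos⟩, fun h => absurd h hj⟩
    choose f hf using hbp
    have hle : bs.card ≤ (Finset.univ : Finset (Fin K)).card := by
      apply Finset.card_le_card_of_injOn f (fun j _ => Finset.mem_univ _)
      intro j hj j' hj' heq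
      have h1 : I.a ((f j : ℕ) + 1) ∈ Q.cell j := hf j (by simpa using hj)
      have h2 : I.a ((f j : ℕ) + 1) ∈ Q.cell j' := by
        rw [heq]; exact hf j' (by simpa using hj')
      exact Q.cell_unique h1 h2
    simpa using hle
  have hBdvol : volume Bd ≤ ENNReal.ofReal ((K : ℝ) / n) := by
    calc volume Bd ≤ ∑ j ∈ bs, volume (Q.cell j) := measure_biUnion_finset_le _ _
      _ ≤ ∑ _j ∈ bs, ENNReal.ofReal (1 / n) := by
          refine Finset.sum_le_sum (fun j _ => ?_)
          rw [Q.volume_cell j]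
          exact ENNReal.ofReal_le_ofReal (hmesh j j.isLt)
      _ = (bs.card : ENNReal) * ENNReal.ofReal (1 / n) := by
          rw [Finset.sum_const, nsmul_eq_mul]
      _ ≤ (K : ENNReal) * ENNReal.ofReal (1 / n) :=
          mul_le_mul' (by exact_mod_cast hcard) le_rfl
      _ = ENNReal.ofReal ((K : ℝ) / n) := by
          rw [← ENNReal.ofReal_natCast K, ← ENNReal.ofReal_mul (Nat.cast_nonneg K),
            mul_one_div]
  set IB := ∫ x in Icc (0:ℝ) 1, ind x with hIBdef
  have hIB_nonneg : 0 ≤ IB :=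
    setIntegral_nonneg measurableSet_Icc (fun x _ => (hind01 x).1)
  have hIB_le : IB ≤ (K:ℝ)/n := by
    have hIB_eq : IB = (volume (Icc (0:ℝ) 1 ∩ Bd)).toReal := by
      rw [hIBdef, hindDef, setIntegral_indicator hBdmeas]
      simp [setIntegral_const, measureReal_def]
    rw [hIB_eq]
    apply ENNReal.toReal_le_of_le_ofReal (by positivity)
    exact le_trans (measure_mono inter_subset_right) hBdvol
  have hpt : ∀ x ∈ Icc (0:ℝ) 1, ∀ y ∈ Icc (0:ℝ) 1,
      |W x y - discretize W Q x y| ≤ 2*θ/n + M * ind x + M * ind y := by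
    intro x hx y hy
    obtain ⟨i, hi⟩ := Q.mem_cell hx
    obtain ⟨j, hj⟩ := Q.mem_cell hy
    have hixnn : 0 ≤ ind x := (hind01 x).1
    have hiynn : 0 ≤ ind y := (hind01 y).1
    have hpos : (0:ℝ) ≤ 2*θ/n := by positivity
    have hMbd : |W x y - discretize W Q x y| ≤ M := by
      have h1 := hWbdd x hx y hy
      have h2 := hWQbdd x hx y hy
      rw [abs_le]
      exact ⟨by linarith [h1.1, h1.2, h2.1, h2.2], by linarith [h1.1, h1.2, h2.1, h2.2]⟩
    by_cases hgi : ∃ k : Fin K, Q.cell i ⊆ I.cell k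
    · by_cases hgj : ∃ k : Fin K, Q.cell j ⊆ I.cell k
      · obtain ⟨k₁, hk₁⟩ := hgi
        obtain ⟨k₂, hk₂⟩ := hgj
        have happ := good_approx I Q hWmeas hWbdd hM hθ hLip hk₁ hk₂ hi hj
        rw [discretize_eq Q W hi hj]
        have hb : θ * ((Q.a ((i:ℕ)+1) - Q.a i) + (Q.a ((j:ℕ)+1) - Q.a j)) ≤ 2*θ/n := by
          have h1 := hmesh i i.isLt
          have h2 := hmesh j j.isLt
          calc θ * ((Q.a ((i:ℕ)+1) - Q.a i) + (Q.a ((j:ℕ)+1) - Q.a j))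
              ≤ θ * (1/n + 1/n) :=
                mul_le_mul_of_nonneg_left (add_le_add h1 h2) hθ
            _ = 2*θ/n := by ring
        linarith [mul_nonneg hM hixnn, mul_nonneg hM hiynn]
      · have hyBd : ind y = 1 := by
          rw [hindDef, Set.indicator_of_mem, Pi.one_apply]
          exact Set.mem_biUnion (show j ∈ bs by
            rw [hbs]; exact Finset.mem_filter.mpr ⟨Finset.mem_univ _, hgj⟩) hj
        rw [hyBd]
        linarith [mul_nonneg hM hixnn]
    · have hxBd : ind x = 1 := by
        rw [hindDef, Set.indicator_of_mem, Pi.one_apply]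
        exact Set.mem_biUnion (show i ∈ bs by
          rw [hbs]; exact Finset.mem_filter.mpr ⟨Finset.mem_univ _, hgi⟩) hi
      rw [hxBd]
      linarith [mul_nonneg hM hiynn]
  -- assemble
  have hDmeas : Measurable (fun p : ℝ × ℝ => |W p.1 p.2 - discretize W Q p.1 p.2|) :=
    (hWmeas.sub hWQmeas).abs
  have hSvol : volume (Icc (0:ℝ) 1) ≠ ⊤ := by rw [volume_S]; exact ENNReal.one_ne_top
  have hDabs : ∀ x ∈ Icc (0:ℝ) 1, ∀ y ∈ Icc (0:ℝ) 1,
      |(|W x y - discretize W Q x y|)| ≤ M := by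
    intro x hx y hy
    rw [abs_abs]
    have h1 := hWbdd x hx y hy
    have h2 := hWQbdd x hx y hy
    rw [abs_le]
    exact ⟨by linarith [h1.1, h1.2, h2.1, h2.2], by linarith [h1.1, h1.2, h2.1, h2.2]⟩
  have hIndInt : IntegrableOn ind (Icc (0:ℝ) 1) :=
    integrableOn_of_bdd measurableSet_Icc hSvol hindmeas (C := 1)
      (fun z _ => by rw [abs_of_nonneg (hind01 z).1]; exact (hind01 z).2)
  have hinner : ∀ x ∈ Icc (0:ℝ) 1,
      (∫ y in Icc (0:ℝ) 1, |W x y - discretize W Q x y|) ≤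
        (2*θ/n + M * IB) + M * ind x := by
    intro x hx
    have hint1 : IntegrableOn (fun y => |W x y - discretize W Q x y|) (Icc (0:ℝ) 1) :=
      integrableOn_of_bdd measurableSet_Icc hSvol
        (hDmeas.comp measurable_prodMk_left) (C := M)
        (fun y hy => hDabs x hx y hy)
    have hint2 : IntegrableOn (fun y => (2*θ/n + M * ind x) + M * ind y) (Icc (0:ℝ) 1) :=
      (integrableOn_const hSvol).add (hIndInt.const_mul M)
    have hmono := setIntegral_mono_on hint1 hint2 measurableSet_Icc
      (fun y hy => by linarith [hpt x hx y hy])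
    have heval : (∫ y in Icc (0:ℝ) 1, ((2*θ/n + M * ind x) + M * ind y)) =
        (2*θ/n + M * ind x) + M * IB := by
      rw [integral_add (integrableOn_const (C := 2*θ/n + M * ind x) hSvol) (hIndInt.const_mul M),
        setIntegral_S_const, integral_const_mul]
    rw [heval] at hmono
    linarith [hmono]
  have houter_int : IntegrableOn
      (fun x => ∫ y in Icc (0:ℝ) 1, |W x y - discretize W Q x y|) (Icc (0:ℝ) 1) := by
    refine integrableOn_of_bdd measurableSet_Icc hSvol (meas_param hDmeas _) (C := M) ?_
    intro x hx
    have := abs_setIntegral_le (g := fun y => |W x y - discretize W Q x y|)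
      measurableSet_Icc hSvol.lt_top (C := M) (fun y hy => hDabs x hx y hy)
    rw [volume_S] at this
    simpa using this
  have hint2' : IntegrableOn (fun x => (2*θ/n + M * IB) + M * ind x) (Icc (0:ℝ) 1) :=
    (integrableOn_const hSvol).add (hIndInt.const_mul M)
  have hfin := setIntegral_mono_on houter_int hint2' measurableSet_Icc hinner
  have heval2 : (∫ x in Icc (0:ℝ) 1, ((2*θ/n + M * IB) + M * ind x)) =
      (2*θ/n + M * IB) + M * IB := by
    rw [integral_add (integrableOn_const (C := 2*θ/n + M * IB) hSvol) (hIndInt.const_mul M),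
      setIntegral_S_const, integral_const_mul]
  rw [heval2] at hfin
  have hMIB : M * IB ≤ M * ((K:ℝ)/n) := mul_le_mul_of_nonneg_left hIB_le hM
  have : (2*θ/n + M * ((K:ℝ)/n)) + M * ((K:ℝ)/n) = (2 * θ + 2 * K * M) / n := by
    field_simp
    ring
  linarith [hfin, hMIB]


lemma perturb_props {M : ℝ} {W W2 : ℝ → ℝ → ℝ}
    (hWmeas : Measurable (Function.uncurry W))
    (hWbdd : ∀ x ∈ Icc (0:ℝ) 1, ∀ y ∈ Icc (0:ℝ) 1, W x y ∈ Icc (0:ℝ) M)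
    (hW2meas : Measurable (Function.uncurry W2))
    (hW2bdd : ∀ x ∈ Icc (0:ℝ) 1, ∀ y ∈ Icc (0:ℝ) 1, W2 x y ∈ Icc (0:ℝ) M)
    {g : ℝ → ℝ} (hg : Measurable g) (hgb : ∀ y ∈ Icc (0:ℝ) 1, g y ∈ Icc (-1:ℝ) 1) :
    Measurable (fun x => ∫ y in Icc (0:ℝ) 1, (W x y - W2 x y) * g y) ∧
    (∀ x ∈ Icc (0:ℝ) 1, |∫ y in Icc (0:ℝ) 1, (W x y - W2 x y) * g y| ≤ M) ∧
    (∫ x in Icc (0:ℝ) 1, |∫ y in Icc (0:ℝ) 1, (W x y - W2 x y) * g y|) ≤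
      ∫ x in Icc (0:ℝ) 1, ∫ y in Icc (0:ℝ) 1, |W x y - W2 x y| := by
  have hSvol : volume (Icc (0:ℝ) 1) ≠ ⊤ := by rw [volume_S]; exact ENNReal.one_ne_top
  have hdm : Measurable (fun p : ℝ × ℝ => W p.1 p.2 - W2 p.1 p.2) := hWmeas.sub hW2meas
  have hm : Measurable (fun p : ℝ × ℝ => (W p.1 p.2 - W2 p.1 p.2) * g p.2) :=
    hdm.mul (hg.comp measurable_snd)
  have hvmeas : Measurable (fun x => ∫ y in Icc (0:ℝ) 1, (W x y - W2 x y) * g y) :=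
    meas_param (F := fun x y => (W x y - W2 x y) * g y) hm _
  have hDbd : ∀ x ∈ Icc (0:ℝ) 1, ∀ y ∈ Icc (0:ℝ) 1, |W x y - W2 x y| ≤ M := by
    intro x hx y hy
    have h1 := hWbdd x hx y hy
    have h2 := hW2bdd x hx y hy
    rw [abs_le]
    exact ⟨by linarith [h1.1, h1.2, h2.1, h2.2], by linarith [h1.1, h1.2, h2.1, h2.2]⟩
  have hDint : ∀ x ∈ Icc (0:ℝ) 1,
      IntegrableOn (fun y => |W x y - W2 x y|) (Icc (0:ℝ) 1) := by
    intro x hx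
    exact integrableOn_of_bdd measurableSet_Icc hSvol
      ((hdm.comp measurable_prodMk_left).abs) (C := M)
      (fun y hy => by rw [abs_abs]; exact hDbd x hx y hy)
  have h2 : ∀ x ∈ Icc (0:ℝ) 1, |∫ y in Icc (0:ℝ) 1, (W x y - W2 x y) * g y| ≤
      ∫ y in Icc (0:ℝ) 1, |W x y - W2 x y| := by
    intro x hx
    refine abs_setIntegral_le_of_le (hm.comp measurable_prodMk_left) (hDint x hx) ?_
    intro y hy
    rw [abs_mul]
    have hg1 : |g y| ≤ 1 := by
      rw [abs_le]; exact ⟨(hgb y hy).1, (hgb y hy).2⟩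
    nlinarith [abs_nonneg (W x y - W2 x y), abs_nonneg (g y)]
  have hDint2 : IntegrableOn (fun x => ∫ y in Icc (0:ℝ) 1, |W x y - W2 x y|)
      (Icc (0:ℝ) 1) := by
    refine integrableOn_of_bdd measurableSet_Icc hSvol (meas_param hdm.abs _) (C := M) ?_
    intro x hx
    have := abs_setIntegral_le (g := fun y => |W x y - W2 x y|) measurableSet_Icc
      hSvol.lt_top (C := M) (fun y hy => by rw [abs_abs]; exact hDbd x hx y hy)
    rw [volume_S] at this
    simpa using this
  refine ⟨hvmeas, ?_, ?_⟩
  · intro x hx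
    refine (h2 x hx).trans ?_
    have := abs_setIntegral_le (g := fun y => |W x y - W2 x y|) measurableSet_Icc
      hSvol.lt_top (C := M) (fun y hy => by rw [abs_abs]; exact hDbd x hx y hy)
    rw [volume_S] at this
    calc (∫ y in Icc (0:ℝ) 1, |W x y - W2 x y|) ≤
        |(∫ y in Icc (0:ℝ) 1, |W x y - W2 x y|)| := le_abs_self _
      _ ≤ M := by simpa using this
  · refine setIntegral_mono_on ?_ hDint2 measurableSet_Icc (fun x hx => h2 x hx)
    refine integrableOn_of_bdd measurableSet_Icc hSvol hvmeas.abs (C := M) ?_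
    intro x hx
    rw [abs_abs]
    refine (h2 x hx).trans ?_
    have := abs_setIntegral_le (g := fun y => |W x y - W2 x y|) measurableSet_Icc
      hSvol.lt_top (C := M) (fun y hy => by rw [abs_abs]; exact hDbd x hx y hy)
    rw [volume_S] at this
    calc (∫ y in Icc (0:ℝ) 1, |W x y - W2 x y|) ≤
        |(∫ y in Icc (0:ℝ) 1, |W x y - W2 x y|)| := le_abs_self _
      _ ≤ M := by simpa using this


lemma Tk_sub {M : ℝ} {W W2 : ℝ → ℝ → ℝ}
    (hWmeas : Measurable (Function.uncurry W))
    (hWbdd : ∀ x ∈ Icc (0:ℝ) 1, ∀ y ∈ Icc (0:ℝ) 1, W x y ∈ Icc (0:ℝ) M)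
    (hW2meas : Measurable (Function.uncurry W2))
    (hW2bdd : ∀ x ∈ Icc (0:ℝ) 1, ∀ y ∈ Icc (0:ℝ) 1, W2 x y ∈ Icc (0:ℝ) M)
    {g : ℝ → ℝ} (hg : Measurable g) (hgb : ∀ y ∈ Icc (0:ℝ) 1, g y ∈ Icc (-1:ℝ) 1)
    {x : ℝ} (hx : x ∈ Icc (0:ℝ) 1) :
    Tk W g x - Tk W2 g x = ∫ y in Icc (0:ℝ) 1, (W x y - W2 x y) * g y := by
  have hgb' : ∀ y ∈ Icc (0:ℝ) 1, |g y| ≤ 1 := by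
    intro y hy; rw [abs_le]; exact ⟨(hgb y hy).1, (hgb y hy).2⟩
  have i1 : IntegrableOn (fun y => W x y * g y) (Icc (0:ℝ) 1) :=
    integrableOn_mul_sect hWmeas hWbdd hx hg hgb' measurableSet_Icc subset_rfl
  have i2 : IntegrableOn (fun y => W2 x y * g y) (Icc (0:ℝ) 1) :=
    integrableOn_mul_sect hW2meas hW2bdd hx hg hgb' measurableSet_Icc subset_rfl
  show (∫ y in Icc (0:ℝ) 1, W x y * g y) - (∫ y in Icc (0:ℝ) 1, W2 x y * g y) = _
  rw [← integral_sub i1 i2]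
  simp only [sub_mul]

theorem stmt_7 (M θ η : ℝ) {K : ℕ} (hη : 0 < η) (W : ℝ → ℝ → ℝ)
    (I : IntervalPartition K)
    (hWmeas : Measurable (Function.uncurry W))
    (hWbdd : ∀ x ∈ Icc (0:ℝ) 1, ∀ y ∈ Icc (0:ℝ) 1, W x y ∈ Icc (0:ℝ) M)
    (hWrow : ∀ x ∈ Icc (0:ℝ) 1, (∫ y in Icc (0:ℝ) 1, W x y) = 1)
    (hLip : ∀ k₁ k₂ : Fin K, ∀ x ∈ I.cell k₁, ∀ x' ∈ I.cell k₁,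
      ∀ y ∈ I.cell k₂, ∀ y' ∈ I.cell k₂,
        |W x y - W x' y'| ≤ θ * (|x - x'| + |y - y'|)) :
    ∃ n₀ : ℕ, 0 < n₀ ∧ ∀ n ≥ n₀, ∀ (J : ℕ) (Q : IntervalPartition J),
      (∀ i < J, Q.a (i + 1) - Q.a i ≤ 1 / n) →
      ∀ t : ℕ, 1 ≤ t → ∀ f₀ : ℝ → ℝ, Measurable f₀ →
        (∀ x ∈ Icc (0:ℝ) 1, f₀ x ∈ Icc (-1:ℝ) 1) →
        L1norm (fun x => (Tk W)^[t] f₀ x - (Tk (discretize W Q))^[t] f₀ x) ≤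
          min 2 (t * η) := by
  have hM : 0 ≤ M :=
    le_trans (hWbdd 0 (by norm_num) 0 (by norm_num)).1 (hWbdd 0 (by norm_num) 0 (by norm_num)).2
  have hθ : 0 ≤ θ := by
    set i0 : Fin K := ⟨0, I.npos⟩ with hi0
    have ha1 : 0 < I.a 1 := by
      have h := I.mono 0 I.npos
      rwa [I.first] at h
    have h0cell : (0:ℝ) ∈ I.cell i0 := by
      apply I.Ico_subset_cell i0
      exact ⟨le_of_eq I.first, ha1⟩
    have hmid : I.a 1 / 2 ∈ I.cell i0 := by
      apply I.Ico_subset_cell i0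
      constructor
      · exact le_trans (le_of_eq I.first) (by linarith)
      · show I.a 1 / 2 < I.a 1
        linarith
    have hL := hLip i0 i0 0 h0cell (I.a 1 / 2) hmid 0 h0cell 0 h0cell
    have h2 : (0:ℝ) ≤ θ * (|0 - I.a 1 / 2| + |(0:ℝ) - 0|) := le_trans (abs_nonneg _) hL
    rw [zero_sub, abs_neg, abs_of_pos (by linarith), sub_self, abs_zero] at h2
    nlinarith
  have hSvol : volume (Icc (0:ℝ) 1) ≠ ⊤ := by rw [volume_S]; exact ENNReal.one_ne_top
  refine ⟨⌈(M + 1) * (2 * θ + 2 * K * M) / η⌉₊ + 1, Nat.succ_pos _, ?_⟩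
  intro n hn J Q hmesh t ht f₀ hf₀ hf₀b
  have hn0 : 0 < n := lt_of_lt_of_le (Nat.succ_pos _) hn
  have hnR : (0:ℝ) < n := by exact_mod_cast hn0
  have hCn : (M + 1) * (2 * θ + 2 * K * M) ≤ n * η := by
    have h1 : (M + 1) * (2 * θ + 2 * K * M) / η ≤ (⌈(M + 1) * (2 * θ + 2 * K * M) / η⌉₊ : ℝ) :=
      Nat.le_ceil _
    have h2 : ((⌈(M + 1) * (2 * θ + 2 * K * M) / η⌉₊ : ℝ) + 1) ≤ n := by exact_mod_cast hn
    have h3 : (M + 1) * (2 * θ + 2 * K * M) / η ≤ n := by linarith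
    calc (M + 1) * (2 * θ + 2 * K * M) = ((M + 1) * (2 * θ + 2 * K * M) / η) * η := by
          field_simp
      _ ≤ n * η := mul_le_mul_of_nonneg_right h3 hη.le
  have hWQmeas : Measurable (Function.uncurry (discretize W Q)) := discretize_measurable Q W
  have hWQbdd := discretize_mem_Icc Q hWmeas hWbdd hM
  have hWQrow := discretize_row Q hWmeas hWbdd hWrow hM
  have hF := Tk_iterate_props hWmeas hWbdd hWrow hf₀ hf₀b
  have hG := Tk_iterate_props hWQmeas hWQbdd hWQrow hf₀ hf₀b
  obtain ⟨δ, hδdef⟩ : ∃ δ, δ = ∫ x in Icc (0:ℝ) 1, ∫ y in Icc (0:ℝ) 1,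
      |W x y - discretize W Q x y| := ⟨_, rfl⟩
  have hδnn : 0 ≤ δ := by
    rw [hδdef]
    exact setIntegral_nonneg measurableSet_Icc (fun x _ =>
      setIntegral_nonneg measurableSet_Icc (fun y _ => abs_nonneg _))
  have hδle : δ ≤ (2 * θ + 2 * K * M) / n := by
    rw [hδdef]
    exact delta_le hn0 I Q hWmeas hWbdd hM hθ hLip hmesh
  have hkey : ∀ g : ℝ → ℝ, Measurable g → (∀ y ∈ Icc (0:ℝ) 1, g y ∈ Icc (-1:ℝ) 1) →
      Measurable (fun x => ∫ y in Icc (0:ℝ) 1, (W x y - discretize W Q x y) * g y) ∧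
      (∀ x ∈ Icc (0:ℝ) 1, |∫ y in Icc (0:ℝ) 1, (W x y - discretize W Q x y) * g y| ≤ M) ∧
      (∫ x in Icc (0:ℝ) 1, |∫ y in Icc (0:ℝ) 1, (W x y - discretize W Q x y) * g y|) ≤ δ := by
    intro g hg hgb
    obtain ⟨p1, p2, p3⟩ := perturb_props hWmeas hWbdd hWQmeas hWQbdd hg hgb
    exact ⟨p1, p2, by rw [hδdef]; exact p3⟩
  -- main induction
  have main : ∀ m : ℕ, ∃ u v : ℝ → ℝ, Measurable u ∧ Measurable v ∧
      (∀ x ∈ Icc (0:ℝ) 1,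
        (Tk W)^[m+1] f₀ x - (Tk (discretize W Q))^[m+1] f₀ x = u x + v x) ∧
      (∀ x ∈ Icc (0:ℝ) 1, |u x| ≤ m * M * δ) ∧
      (∀ x ∈ Icc (0:ℝ) 1, |v x| ≤ M) ∧
      ((∫ x in Icc (0:ℝ) 1, |v x|) ≤ δ) := by
    intro m
    induction m with
    | zero =>
      obtain ⟨p1, p2, p3⟩ := hkey f₀ hf₀ hf₀b
      refine ⟨fun _ => 0, fun x => ∫ y in Icc (0:ℝ) 1, (W x y - discretize W Q x y) * f₀ y,
        measurable_const, p1, ?_, ?_, p2, p3⟩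
      · intro x hx
        simp only [Function.iterate_one, zero_add]
        exact Tk_sub hWmeas hWbdd hWQmeas hWQbdd hf₀ hf₀b hx
      · intro x hx
        simp
    | succ m ih =>
      obtain ⟨u, v, hum, hvm, heq, hub, hvb, hvint⟩ := ih
      have hF' := hF (m+1)
      have hG' := hG (m+1)
      have hF'b : ∀ y ∈ Icc (0:ℝ) 1, |(Tk W)^[m+1] f₀ y| ≤ 1 := by
        intro y hy; rw [abs_le]; exact ⟨(hF'.2 y hy).1, (hF'.2 y hy).2⟩
      have hG'b : ∀ y ∈ Icc (0:ℝ) 1, |(Tk (discretize W Q))^[m+1] f₀ y| ≤ 1 := by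
        intro y hy; rw [abs_le]; exact ⟨(hG'.2 y hy).1, (hG'.2 y hy).2⟩
      obtain ⟨p1, p2, p3⟩ := hkey _ hG'.1 hG'.2
      refine ⟨fun x => (∫ y in Icc (0:ℝ) 1, W x y * u y) + ∫ y in Icc (0:ℝ) 1, W x y * v y,
        fun x => ∫ y in Icc (0:ℝ) 1, (W x y - discretize W Q x y) * (Tk (discretize W Q))^[m+1] f₀ y,
        ?_, p1, ?_, ?_, p2, p3⟩
      · exact (meas_param (F := fun x y => W x y * u y)
            (hWmeas.mul (hum.comp measurable_snd)) _).add
          (meas_param (F := fun x y => W x y * v y)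
            (hWmeas.mul (hvm.comp measurable_snd)) _)
      · -- the decomposition identity
        intro x hx
        rw [Function.iterate_succ_apply' (Tk W) (m+1) f₀,
          Function.iterate_succ_apply' (Tk (discretize W Q)) (m+1) f₀]
        have iF : IntegrableOn (fun y => W x y * (Tk W)^[m+1] f₀ y) (Icc (0:ℝ) 1) :=
          integrableOn_mul_sect hWmeas hWbdd hx hF'.1 hF'b measurableSet_Icc subset_rfl
        have iWG : IntegrableOn (fun y => W x y * (Tk (discretize W Q))^[m+1] f₀ y)
            (Icc (0:ℝ) 1) :=
          integrableOn_mul_sect hWmeas hWbdd hx hG'.1 hG'b measurableSet_Icc subset_rfl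
        have iQG : IntegrableOn
            (fun y => discretize W Q x y * (Tk (discretize W Q))^[m+1] f₀ y) (Icc (0:ℝ) 1) :=
          integrableOn_mul_sect hWQmeas hWQbdd hx hG'.1 hG'b measurableSet_Icc subset_rfl
        have iu : IntegrableOn (fun y => W x y * u y) (Icc (0:ℝ) 1) :=
          integrableOn_mul_sect hWmeas hWbdd hx hum hub measurableSet_Icc subset_rfl
        have iv : IntegrableOn (fun y => W x y * v y) (Icc (0:ℝ) 1) :=
          integrableOn_mul_sect hWmeas hWbdd hx hvm hvb measurableSet_Icc subset_rfl
        have step1 : Tk W ((Tk W)^[m+1] f₀) x - Tk W ((Tk (discretize W Q))^[m+1] f₀) x =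
            (∫ y in Icc (0:ℝ) 1, W x y * u y) + ∫ y in Icc (0:ℝ) 1, W x y * v y := by
          show (∫ y in Icc (0:ℝ) 1, W x y * (Tk W)^[m+1] f₀ y) -
            (∫ y in Icc (0:ℝ) 1, W x y * (Tk (discretize W Q))^[m+1] f₀ y) = _
          rw [← integral_sub iF iWG, ← integral_add iu iv]
          refine setIntegral_congr_fun measurableSet_Icc (fun y hy => ?_)
          have h := heq y hy
          calc W x y * (Tk W)^[m+1] f₀ y - W x y * (Tk (discretize W Q))^[m+1] f₀ y
              = W x y * ((Tk W)^[m+1] f₀ y - (Tk (discretize W Q))^[m+1] f₀ y) := by ring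
            _ = W x y * (u y + v y) := by rw [h]
            _ = W x y * u y + W x y * v y := by ring
        have step2 : Tk W ((Tk (discretize W Q))^[m+1] f₀) x -
            Tk (discretize W Q) ((Tk (discretize W Q))^[m+1] f₀) x =
            ∫ y in Icc (0:ℝ) 1,
              (W x y - discretize W Q x y) * (Tk (discretize W Q))^[m+1] f₀ y :=
          Tk_sub hWmeas hWbdd hWQmeas hWQbdd hG'.1 hG'.2 hx
        beta_reduce
        linarith [step1, step2]
      · -- bound on u'
        intro x hx
        have hWnn : ∀ y ∈ Icc (0:ℝ) 1, 0 ≤ W x y := fun y hy => (hWbdd x hx y hy).1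
        have hWle : ∀ y ∈ Icc (0:ℝ) 1, W x y ≤ M := fun y hy => (hWbdd x hx y hy).2
        have b1 : |∫ y in Icc (0:ℝ) 1, W x y * u y| ≤ m * M * δ := by
          have hle := abs_setIntegral_le_of_le (g := fun y => W x y * u y)
            ((hWmeas.comp measurable_prodMk_left).mul hum)
            (h := fun y => W x y * (m * M * δ))
            ((integrableOn_sect hWmeas hWbdd hx measurableSet_Icc subset_rfl).mul_const _)
            (fun y hy => by
              rw [abs_mul, abs_of_nonneg (hWnn y hy)]
              exact mul_le_mul_of_nonneg_left (hub y hy) (hWnn y hy))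
          rwa [integral_mul_const, hWrow x hx, one_mul] at hle
        have hvabs : IntegrableOn (fun y => |v y|) (Icc (0:ℝ) 1) :=
          (integrableOn_of_bdd measurableSet_Icc hSvol hvm (C := M) hvb).abs
        have b2 : |∫ y in Icc (0:ℝ) 1, W x y * v y| ≤ M * δ := by
          have hle := abs_setIntegral_le_of_le (g := fun y => W x y * v y)
            ((hWmeas.comp measurable_prodMk_left).mul hvm)
            (h := fun y => M * |v y|) (hvabs.const_mul M)
            (fun y hy => by
              rw [abs_mul]
              exact mul_le_mul (by rw [abs_of_nonneg (hWnn y hy)]; exact hWle y hy)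
                le_rfl (abs_nonneg _) hM)
          rw [integral_const_mul] at hle
          exact hle.trans (mul_le_mul_of_nonneg_left hvint hM)
        calc |(∫ y in Icc (0:ℝ) 1, W x y * u y) + ∫ y in Icc (0:ℝ) 1, W x y * v y|
            ≤ |∫ y in Icc (0:ℝ) 1, W x y * u y| + |∫ y in Icc (0:ℝ) 1, W x y * v y| :=
              abs_add_le _ _
          _ ≤ m * M * δ + M * δ := add_le_add b1 b2
          _ = (m + 1 : ℕ) * M * δ := by push_cast; ring
  -- conclusion
  obtain ⟨m, rfl⟩ : ∃ m, t = m + 1 := ⟨t - 1, by omega⟩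
  obtain ⟨u, v, hum, hvm, heq, hub, hvb, hvint⟩ := main m
  have hF' := hF (m+1)
  have hG' := hG (m+1)
  have hdmeas : Measurable
      (fun x => (Tk W)^[m+1] f₀ x - (Tk (discretize W Q))^[m+1] f₀ x) := hF'.1.sub hG'.1
  have hdbd : ∀ x ∈ Icc (0:ℝ) 1,
      |(Tk W)^[m+1] f₀ x - (Tk (discretize W Q))^[m+1] f₀ x| ≤ 2 := by
    intro x hx
    have h1 := hF'.2 x hx
    have h2 := hG'.2 x hx
    rw [abs_le]
    exact ⟨by linarith [h1.1, h1.2, h2.1, h2.2], by linarith [h1.1, h1.2, h2.1, h2.2]⟩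
  have hdint : IntegrableOn
      (fun x => |(Tk W)^[m+1] f₀ x - (Tk (discretize W Q))^[m+1] f₀ x|) (Icc (0:ℝ) 1) :=
    integrableOn_of_bdd measurableSet_Icc hSvol hdmeas.abs (C := 2)
      (fun x hx => by rw [abs_abs]; exact hdbd x hx)
  show (∫ x in Icc (0:ℝ) 1,
      |(Tk W)^[m+1] f₀ x - (Tk (discretize W Q))^[m+1] f₀ x|) ≤ min 2 ((m+1 : ℕ) * η)
  apply le_min
  · calc (∫ x in Icc (0:ℝ) 1,
        |(Tk W)^[m+1] f₀ x - (Tk (discretize W Q))^[m+1] f₀ x|)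
        ≤ ∫ _ in Icc (0:ℝ) 1, (2:ℝ) :=
          setIntegral_mono_on hdint (integrableOn_const hSvol)
            measurableSet_Icc hdbd
      _ = 2 := setIntegral_S_const 2
  · have hu_int : IntegrableOn (fun x => |u x|) (Icc (0:ℝ) 1) :=
      (integrableOn_of_bdd measurableSet_Icc hSvol hum (C := m * M * δ) hub).abs
    have hv_int : IntegrableOn (fun x => |v x|) (Icc (0:ℝ) 1) :=
      (integrableOn_of_bdd measurableSet_Icc hSvol hvm (C := M) hvb).abs
    have h1 : (∫ x in Icc (0:ℝ) 1,
        |(Tk W)^[m+1] f₀ x - (Tk (discretize W Q))^[m+1] f₀ x|) ≤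
        ∫ x in Icc (0:ℝ) 1, (|u x| + |v x|) := by
      refine setIntegral_mono_on hdint (hu_int.add hv_int) measurableSet_Icc ?_
      intro x hx
      rw [heq x hx]
      exact abs_add_le _ _
    have h2 : (∫ x in Icc (0:ℝ) 1, (|u x| + |v x|)) =
        (∫ x in Icc (0:ℝ) 1, |u x|) + ∫ x in Icc (0:ℝ) 1, |v x| :=
      integral_add hu_int hv_int
    have h3 : (∫ x in Icc (0:ℝ) 1, |u x|) ≤ m * M * δ := by
      calc (∫ x in Icc (0:ℝ) 1, |u x|) ≤ ∫ _ in Icc (0:ℝ) 1, (m * M * δ) :=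
          setIntegral_mono_on hu_int (integrableOn_const hSvol)
            measurableSet_Icc hub
        _ = m * M * δ := setIntegral_S_const _
    have h4 : (m : ℝ) * M * δ + δ ≤ (m + 1) * η := by
      have hδn : δ ≤ (2 * θ + 2 * K * M) / n := hδle
      have hmnn : (0:ℝ) ≤ (m : ℝ) := Nat.cast_nonneg m
      have e1 : (m : ℝ) * M * δ + δ = ((m : ℝ) * M + 1) * δ := by ring
      have e2 : ((m : ℝ) * M + 1) * δ ≤ ((m : ℝ) + 1) * (M + 1) * δ := by
        apply mul_le_mul_of_nonneg_right _ hδnn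
        nlinarith
      have e3 : ((m : ℝ) + 1) * (M + 1) * δ ≤
          ((m : ℝ) + 1) * ((M + 1) * ((2 * θ + 2 * K * M) / n)) := by
        rw [mul_assoc]
        apply mul_le_mul_of_nonneg_left _ (by linarith)
        apply mul_le_mul_of_nonneg_left hδn (by linarith)
      have e4 : (M + 1) * ((2 * θ + 2 * K * M) / n) ≤ η := by
        rw [← mul_div_assoc, div_le_iff₀ hnR]
        linarith [hCn]
      have e5 : ((m : ℝ) + 1) * ((M + 1) * ((2 * θ + 2 * K * M) / n)) ≤
          ((m : ℝ) + 1) * η := mul_le_mul_of_nonneg_left e4 (by linarith)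
      linarith
    have : (∫ x in Icc (0:ℝ) 1,
        |(Tk W)^[m+1] f₀ x - (Tk (discretize W Q))^[m+1] f₀ x|) ≤ (m : ℝ) * M * δ + δ := by
      linarith [h1, h2 ▸ h1, h3, hvint]
    push_cast
    linarith [h4]
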